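/- arXiv:2004.07323 — 6 statements merged into one kernel-verified Lean document; each statement's English description precedes it below -/
import Mathlib

section
/- Let n ≥ 1, let E ⊆ ℝⁿ be a nonempty compact set, and let 0 < s < t. Then σ(E, t) ≤ λ(E, s). -/
open MeasureTheory Set Metric Filter ENNReal

/-- The closed `s`-neighborhood of a set `A ⊆ ℝⁿ`. -/
noncomputable def closedNbhd {n : ℕ} (A : Set (EuclideanSpace ℝ (Fin n))) (s : ℝ) :
    Set (EuclideanSpace ℝ (Fin n)) :=
  {x | Metric.infDist x A ≤ s}

/-- The `s`-maximum distance length `λ(E, s)`. -/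
noncomputable def mdLength {n : ℕ} (E : Set (EuclideanSpace ℝ (Fin n))) (s : ℝ) : ℝ≥0∞ :=
  ⨅ (K : Set (EuclideanSpace ℝ (Fin n))) (_ : K.Nonempty) (_ : IsCompact K)
    (_ : IsConnected K) (_ : E ⊆ closedNbhd K s), μH[1] K

/-- The Steiner length `St(X)` of a set `X ⊆ ℝⁿ`. -/
noncomputable def steinerLength {n : ℕ} (X : Set (EuclideanSpace ℝ (Fin n))) : ℝ≥0∞ :=
  ⨅ (S : Set (EuclideanSpace ℝ (Fin n))) (_ : IsCompact S) (_ : IsConnected S)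
    (_ : X ⊆ S), μH[1] S

/-- The `s`-spanning length `σ(E, s)`. -/
noncomputable def spanLength {n : ℕ} (E : Set (EuclideanSpace ℝ (Fin n))) (s : ℝ) : ℝ≥0∞ :=
  ⨅ (X : Set (EuclideanSpace ℝ (Fin n))) (_ : X.Finite) (_ : X.Nonempty)
    (_ : E ⊆ closedNbhd X s), steinerLength X

/-- If `0 < s < t` then `σ(E, t) ≤ λ(E, s)`. -/
theorem spanLength_le_mdLength_of_lt {n : ℕ} (hn : 1 ≤ n)
    (E : Set (EuclideanSpace ℝ (Fin n))) (hE : E.Nonempty) (hEc : IsCompact E)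
    (s t : ℝ) (hs : 0 < s) (hst : s < t) :
    spanLength E t ≤ mdLength E s := by
  rw [mdLength]
  simp only [le_iInf_iff]
  intro K hKne hKc hKconn hEK
  -- get a finite (t-s)-net X ⊆ K
  obtain ⟨X, hXK, hXfin, hcov⟩ :=
    hKc.finite_cover_balls (e := t - s) (by linarith)
  have hXne : X.Nonempty := by
    obtain ⟨k, hk⟩ := hKne
    rcases Set.mem_iUnion₂.mp (hcov hk) with ⟨x, hx, _⟩
    exact ⟨x, hx⟩
  have hEX : E ⊆ closedNbhd X t := by
    intro e he
    have h1 : Metric.infDist e K ≤ s := hEK he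
    obtain ⟨k, hkK, hkd⟩ := hKc.exists_infDist_eq_dist hKne e
    rcases Set.mem_iUnion₂.mp (hcov hkK) with ⟨x, hxX, hxb⟩
    have : dist e x ≤ dist e k + dist k x := dist_triangle e k x
    have hkx : dist k x < t - s := Metric.mem_ball.mp hxb
    have : dist e x ≤ t := by rw [← hkd] at this; linarith
    exact le_trans (Metric.infDist_le_dist_of_mem hxX) this
  calc spanLength E t ≤ steinerLength X := by
        rw [spanLength]
        exact iInf_le_of_le X (iInf_le_of_le hXfin (iInf_le_of_le hXne (iInf_le _ hEX)))
    _ ≤ μH[1] K := by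
        rw [steinerLength]
        exact iInf_le_of_le K (iInf_le_of_le hKc (iInf_le_of_le hKconn (iInf_le _ hXK)))
end

section
/- Let s > 0 and let x, y ∈ ℝ² with x ≠ y, and let [x, y] denote the closed line segment joining x and y. If E = B([x, y], s), then σ(E, s) = λ(E, s). -/
open MeasureTheory Set Metric Filter ENNReal

/- ### Auxiliary lemmas -/

lemma my_edist_le_hausdorff_of_connected {X : Type*} [MetricSpace X] [MeasurableSpace X]
    [BorelSpace X] {K : Set X} (hK : IsConnected K) {a b : X} (ha : a ∈ K) (hb : b ∈ K) :
    ENNReal.ofReal (dist a b) ≤ μH[1] K := by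
  have hlip : LipschitzWith 1 (dist · a) := LipschitzWith.dist_left a
  have h1 : μH[1] ((dist · a) '' K) ≤ μH[1] K := by
    simpa using hlip.hausdorffMeasure_image_le (d := 1) (by norm_num) K
  have hconn : IsPreconnected ((dist · a) '' K) :=
    hK.isPreconnected.image _ (hlip.continuous.continuousOn)
  have hsub : Icc 0 (dist b a) ⊆ (dist · a) '' K := by
    have h0 : (0:ℝ) ∈ (dist · a) '' K := ⟨a, ha, by simp⟩
    have h2 : dist b a ∈ (dist · a) '' K := ⟨b, hb, rfl⟩
    exact hconn.Icc_subset h0 h2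
  have hle : ENNReal.ofReal (dist b a) ≤ μH[1] ((dist · a) '' K) := by
    calc ENNReal.ofReal (dist b a) = μH[1] (Icc (0:ℝ) (dist b a)) := by
          rw [hausdorffMeasure_real, Real.volume_Icc]; simp
      _ ≤ _ := measure_mono hsub
  rw [dist_comm]
  exact hle.trans h1

lemma my_mdLength_le_spanLength {n : ℕ} (E : Set (EuclideanSpace ℝ (Fin n))) (s : ℝ) :
    mdLength E s ≤ spanLength E s := by
  unfold spanLength steinerLength mdLength
  refine le_iInf fun X => le_iInf fun hXf => le_iInf fun hXne => le_iInf fun hXE => ?_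
  refine le_iInf fun S => le_iInf fun hSc => le_iInf fun hSconn => le_iInf fun hXS => ?_
  refine iInf_le_of_le S (iInf_le_of_le (hXne.mono hXS) (iInf_le_of_le hSc
    (iInf_le_of_le hSconn (iInf_le_of_le ?_ le_rfl))))
  intro e he
  exact le_trans (infDist_le_infDist_of_subset hXS hXne) (hXE he)

lemma my_isCompact_segment {E : Type*} [NormedAddCommGroup E] [NormedSpace ℝ E] (x y : E) :
    IsCompact (segment ℝ x y) := by
  rw [segment_eq_image']
  exact isCompact_Icc.image (by fun_prop)

section Geometry
variable (x y : EuclideanSpace ℝ (Fin 2))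

/-- unit vector from `x` to `y` -/
noncomputable def uvec : EuclideanSpace ℝ (Fin 2) := (dist x y)⁻¹ • (y - x)

/-- unit normal -/
noncomputable def nvec : EuclideanSpace ℝ (Fin 2) :=
  (WithLp.equiv 2 (Fin 2 → ℝ)).symm ![-(uvec x y 1), uvec x y 0]

/-- point with coordinates `(c, e)` in the frame centered at `x` -/
noncomputable def zpt (c e : ℝ) : EuclideanSpace ℝ (Fin 2) :=
  x + c • uvec x y + e • nvec x y

lemma hdu (hxy : x ≠ y) : (dist x y) • uvec x y = y - x := by
  rw [uvec, smul_smul, mul_inv_cancel₀ (dist_pos.2 hxy).ne', one_smul]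

lemma hu_norm (hxy : x ≠ y) : ‖uvec x y‖ = 1 := by
  rw [uvec, norm_smul, norm_inv, Real.norm_eq_abs, abs_of_pos (dist_pos.2 hxy),
    ← dist_eq_norm, dist_comm y x, inv_mul_cancel₀ (dist_pos.2 hxy).ne']

lemma hu_sq (hxy : x ≠ y) : uvec x y 0 ^ 2 + uvec x y 1 ^ 2 = 1 := by
  have h := hu_norm x y hxy
  rw [EuclideanSpace.norm_eq] at h
  have h2 : √(∑ i, ‖uvec x y i‖ ^ 2) ^ 2 = 1 := by rw [h]; norm_num
  rw [Real.sq_sqrt (by positivity)] at h2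
  simpa [Fin.sum_univ_two, Real.norm_eq_abs, sq_abs] using h2

lemma zpt_coords (c e : ℝ) :
    zpt x y c e 0 = x 0 + c * uvec x y 0 - e * uvec x y 1 ∧
    zpt x y c e 1 = x 1 + c * uvec x y 1 + e * uvec x y 0 := by
  constructor <;>
    simp [zpt, nvec, PiLp.add_apply, PiLp.smul_apply, smul_eq_mul,
      WithLp.equiv_symm_apply, PiLp.toLp_apply] <;> ring

lemma hdist_sq (hxy : x ≠ y) (p : EuclideanSpace ℝ (Fin 2)) (c e : ℝ) :
    dist p (zpt x y c e) ^ 2 =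
      (((p 0 - x 0) * uvec x y 0 + (p 1 - x 1) * uvec x y 1) - c) ^ 2 +
      ((-(p 0 - x 0) * uvec x y 1 + (p 1 - x 1) * uvec x y 0) - e) ^ 2 := by
  have hz := zpt_coords x y c e
  rw [EuclideanSpace.dist_eq, Real.sq_sqrt (by positivity)]
  rw [Fin.sum_univ_two, hz.1, hz.2]
  simp only [Real.dist_eq, sq_abs]
  linear_combination (c^2 + e^2 - ((p 0 - x 0)^2 + (p 1 - x 1)^2)) * hu_sq x y hxy

lemma zpt_zero (c : ℝ) : zpt x y c 0 = x + c • uvec x y := by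
  simp [zpt]

lemma zpt_x : zpt x y 0 0 = x := by simp [zpt]

lemma zpt_y (hxy : x ≠ y) : zpt x y (dist x y) 0 = y := by
  rw [zpt_zero, hdu x y hxy]; abel

lemma mem_segment_zpt (hxy : x ≠ y) {c : ℝ} (h0 : 0 ≤ c) (h1 : c ≤ dist x y) :
    zpt x y c 0 ∈ segment ℝ x y := by
  have hd := dist_pos.2 hxy
  rw [segment_eq_image']
  refine ⟨c / dist x y, ⟨by positivity, by rw [div_le_one hd]; exact h1⟩, ?_⟩
  dsimp only
  rw [← hdu x y hxy, smul_smul, div_mul_cancel₀ _ hd.ne', zpt_zero]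

lemma segment_mem_iff (hxy : x ≠ y) {q : EuclideanSpace ℝ (Fin 2)} (hq : q ∈ segment ℝ x y) :
    ∃ c, 0 ≤ c ∧ c ≤ dist x y ∧ q = zpt x y c 0 := by
  rw [segment_eq_image'] at hq
  obtain ⟨t, ht, rfl⟩ := hq
  refine ⟨t * dist x y, mul_nonneg ht.1 dist_nonneg, ?_, ?_⟩
  · nlinarith [ht.2, dist_pos.2 hxy, ht.1]
  · dsimp only
    rw [zpt_zero, ← hdu x y hxy, smul_smul]

lemma nvec_norm (hxy : x ≠ y) : ‖nvec x y‖ = 1 := by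
  rw [EuclideanSpace.norm_eq]
  have h : ∑ i, ‖nvec x y i‖ ^ 2 = 1 := by
    have h2 := hu_sq x y hxy
    simp only [Fin.sum_univ_two, nvec, WithLp.equiv_symm_apply, PiLp.toLp_apply, Real.norm_eq_abs, sq_abs]
    simpa using by linarith [h2]
  rw [h, Real.sqrt_one]

lemma spike_dist (hxy : x ≠ y) (c ε : ℝ) (hε : 0 ≤ ε) :
    dist (zpt x y c (-ε)) (zpt x y c ε) = 2 * ε := by
  have h : zpt x y c (-ε) - zpt x y c ε = (-(2*ε)) • nvec x y := by
    simp only [zpt]; module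
  rw [dist_eq_norm, h, norm_smul, nvec_norm x y hxy, Real.norm_eq_abs]
  rw [abs_neg, abs_of_nonneg (by positivity)]; ring

end Geometry

lemma my_lower_bound (s : ℝ) (hs : 0 < s) (x y : EuclideanSpace ℝ (Fin 2)) (hxy : x ≠ y) :
    ENNReal.ofReal (dist x y) ≤ mdLength (closedNbhd (segment ℝ x y) s) s := by
  have hd : 0 < dist x y := dist_pos.2 hxy
  rw [mdLength]
  refine le_iInf fun K => le_iInf fun hKne => le_iInf fun hKc => le_iInf fun hKconn =>
    le_iInf fun hKE => ?_
  set u := uvec x y with hu_def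
  set p₁ := x - s • u with hp₁
  set p₂ := y + s • u with hp₂
  have hyx : y - x = dist x y • u := (hdu x y hxy).symm
  have hdp₁x : dist p₁ x = s := by
    have h : p₁ - x = (-s) • u := by rw [hp₁]; module
    rw [dist_eq_norm, h, norm_smul, hu_norm x y hxy, Real.norm_eq_abs, abs_neg,
      abs_of_pos hs, mul_one]
  have hdp₂y : dist p₂ y = s := by
    have h : p₂ - y = s • u := by rw [hp₂]; module
    rw [dist_eq_norm, h, norm_smul, hu_norm x y hxy, Real.norm_eq_abs,
      abs_of_pos hs, mul_one]
  have hdp₁p₂ : dist p₁ p₂ = dist x y + 2 * s := by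
    have h : p₂ - p₁ = (dist x y + 2 * s) • u := by
      have : p₂ - p₁ = (y - x) + (2 * s) • u := by rw [hp₁, hp₂]; module
      rw [this, hyx, ← add_smul]
    rw [dist_comm, dist_eq_norm, h, norm_smul, hu_norm x y hxy, Real.norm_eq_abs,
      abs_of_pos (by linarith), mul_one]
  have hp₁E : p₁ ∈ closedNbhd (segment ℝ x y) s :=
    le_trans (infDist_le_dist_of_mem (left_mem_segment ℝ x y)) hdp₁x.le
  have hp₂E : p₂ ∈ closedNbhd (segment ℝ x y) s :=
    le_trans (infDist_le_dist_of_mem (right_mem_segment ℝ x y)) hdp₂y.le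
  obtain ⟨k₁, hk₁K, hk₁⟩ := hKc.exists_infDist_eq_dist hKne p₁
  obtain ⟨k₂, hk₂K, hk₂⟩ := hKc.exists_infDist_eq_dist hKne p₂
  have hd₁ : dist p₁ k₁ ≤ s := by rw [← hk₁]; exact hKE hp₁E
  have hd₂ : dist p₂ k₂ ≤ s := by rw [← hk₂]; exact hKE hp₂E
  have htri : dist p₁ p₂ ≤ dist p₁ k₁ + dist k₁ k₂ + dist k₂ p₂ := dist_triangle4 _ _ _ _
  have hkk : dist x y ≤ dist k₁ k₂ := by
    rw [hdp₁p₂] at htri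
    rw [dist_comm p₂ k₂] at hd₂
    linarith
  exact le_trans (ENNReal.ofReal_le_ofReal hkk)
    (my_edist_le_hausdorff_of_connected hKconn hk₁K hk₂K)


set_option maxHeartbeats 2000000 in
lemma my_cover (s : ℝ) (hs : 0 < s) (x y : EuclideanSpace ℝ (Fin 2)) (hxy : x ≠ y)
    (N : ℕ) (hN1 : 1 ≤ N) (ε : ℝ) (hε0 : 0 < ε) (hεs2 : ε ≤ s / 2)
    (hsq : (dist x y / N) ^ 2 ≤ s * ε)
    (p : EuclideanSpace ℝ (Fin 2)) (hp : infDist p (segment ℝ x y) ≤ s) :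
    ∃ ξ ∈ insert x (insert y
        (⋃ i : Fin (N+1), {zpt x y ((i:ℕ) * dist x y / N) ε,
          zpt x y ((i:ℕ) * dist x y / N) (-ε)})), dist p ξ ≤ s := by
  set d := dist x y with hd_def
  have hd : 0 < d := dist_pos.2 hxy
  have hN0 : (0:ℝ) < N := by exact_mod_cast hN1
  obtain ⟨q, hqseg, hqd⟩ := (my_isCompact_segment x y).exists_infDist_eq_dist
    ⟨x, left_mem_segment ℝ x y⟩ p
  have hdq : dist p q ≤ s := by rw [← hqd]; exact hp
  obtain ⟨c, hc0, hcd, rfl⟩ := segment_mem_iff x y hxy hqseg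
  set a := (p 0 - x 0) * uvec x y 0 + (p 1 - x 1) * uvec x y 1 with ha
  set b := -(p 0 - x 0) * uvec x y 1 + (p 1 - x 1) * uvec x y 0 with hb
  have hkey : (a - c)^2 + b^2 ≤ s^2 := by
    have h := hdist_sq x y hxy p c 0
    rw [← ha, ← hb] at h
    nlinarith [dist_nonneg (x := p) (y := zpt x y c 0)]
  have hb2 : b^2 ≤ s^2 := by nlinarith [sq_nonneg (a - c)]
  rcases le_or_gt a 0 with ha0 | ha0
  · refine ⟨x, mem_insert _ _, ?_⟩
    have h := hdist_sq x y hxy p 0 0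
    rw [zpt_x, ← ha, ← hb] at h
    nlinarith [dist_nonneg (x := p) (y := x), mul_nonneg hc0 (by linarith : (0:ℝ) ≤ c - 2*a)]
  rcases le_or_gt d a with had | had
  · refine ⟨y, mem_insert_of_mem _ (mem_insert _ _), ?_⟩
    have h := hdist_sq x y hxy p d 0
    rw [zpt_y x y hxy, ← ha, ← hb] at h
    have hdc : 0 ≤ d - c := by linarith
    nlinarith [dist_nonneg (x := p) (y := y),
      mul_nonneg hdc (by linarith : (0:ℝ) ≤ 2*a - c - d)]
  -- main case : 0 < a < d
  set i : ℕ := ⌊a * N / d⌋₊ with hi_def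
  have hiN : i ≤ N := by
    have h1 : a * N / d ≤ (N:ℝ) := by
      rw [div_le_iff₀ hd]; nlinarith [had.le]
    calc i ≤ ⌊(N:ℝ)⌋₊ := Nat.floor_mono h1
      _ = N := Nat.floor_natCast N
  set ci := (i:ℝ) * d / N with hci_def
  have hfl : (i:ℝ) ≤ a * N / d := Nat.floor_le (by positivity)
  have hci_le : ci ≤ a := by
    rw [hci_def, div_le_iff₀ hN0]
    have h2 : (i:ℝ) * d ≤ (a * N / d) * d := by nlinarith
    rw [div_mul_cancel₀ _ hd.ne'] at h2
    linarith
  have hgap : a - ci ≤ d / N := by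
    have h3 : a * N / d < (i:ℝ) + 1 := Nat.lt_floor_add_one _
    rw [div_lt_iff₀ hd] at h3
    rw [hci_def, sub_le_iff_le_add, ← add_div, le_div_iff₀ hN0]
    nlinarith
  have hbs : b ≤ s ∧ -s ≤ b := by constructor <;> nlinarith
  have h7 : (a - ci)^2 ≤ s * ε := by nlinarith [hgap, hci_le]
  rcases le_or_gt 0 b with hb0 | hb0
  · refine ⟨zpt x y ci ε, ?_, ?_⟩
    · refine mem_insert_of_mem _ (mem_insert_of_mem _ (mem_iUnion.2
        ⟨⟨i, Nat.lt_succ_of_le hiN⟩, mem_insert _ _⟩))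
    · have h := hdist_sq x y hxy p ci ε
      have h8 : (b - ε)^2 ≤ s^2 - 2*s*ε + ε^2 := by
        nlinarith [mul_nonneg (by linarith [hbs.1] : (0:ℝ) ≤ s - b)
          (by linarith : (0:ℝ) ≤ s + b - 2*ε)]
      nlinarith [dist_nonneg (x := p) (y := zpt x y ci ε)]
  · refine ⟨zpt x y ci (-ε), ?_, ?_⟩
    · refine mem_insert_of_mem _ (mem_insert_of_mem _ (mem_iUnion.2
        ⟨⟨i, Nat.lt_succ_of_le hiN⟩, mem_insert_of_mem _ rfl⟩))
    · have h := hdist_sq x y hxy p ci (-ε)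
      have h8 : (b - (-ε))^2 ≤ s^2 - 2*s*ε + ε^2 := by
        nlinarith [mul_nonneg (by linarith [hbs.2] : (0:ℝ) ≤ s + b)
          (by linarith : (0:ℝ) ≤ s - b - 2*ε)]
      nlinarith [dist_nonneg (x := p) (y := zpt x y ci (-ε))]

lemma my_upper_bound (s : ℝ) (hs : 0 < s) (x y : EuclideanSpace ℝ (Fin 2)) (hxy : x ≠ y) :
    spanLength (closedNbhd (segment ℝ x y) s) s ≤ ENNReal.ofReal (dist x y) := by
  refine ENNReal.le_of_forall_pos_le_add fun ε' hε' _ => ?_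
  set d := dist x y with hd_def
  have hd : 0 < d := dist_pos.2 hxy
  set δ : ℝ := (ε' : ℝ) with hδ_def
  have hδ : 0 < δ := hε'
  obtain ⟨n, hn⟩ := exists_nat_ge (max (2*d/s) (4*d^2/(s*δ)))
  set N : ℕ := n + 1 with hN_def
  have hN1 : 1 ≤ N := Nat.le_add_left 1 n
  have hN0 : (0:ℝ) < N := by exact_mod_cast hN1
  have hNn : (n:ℝ) ≤ N := by exact_mod_cast Nat.le_succ n
  have hNa : 2*d/s ≤ (N:ℝ) := le_trans (le_trans (le_max_left _ _) hn) hNn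
  have hNb : 4*d^2/(s*δ) ≤ (N:ℝ) := le_trans (le_trans (le_max_right _ _) hn) hNn
  set ε : ℝ := d^2/((N:ℝ)^2*s) with hε_def
  have hε0 : 0 < ε := by positivity
  have hns : 2*d ≤ N*s := by rwa [div_le_iff₀ hs] at hNa
  have hεs2 : ε ≤ s / 2 := by
    rw [hε_def, div_le_div_iff₀ (by positivity) two_pos]
    nlinarith [mul_le_mul hns hns (by positivity) (by positivity)]
  have hN1' : (1:ℝ) ≤ (N:ℝ) := by exact_mod_cast hN1
  have hsq : (d / N) ^ 2 ≤ s * ε := by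
    refine le_of_eq ?_
    rw [hε_def, div_pow]
    field_simp
  have hsum : 2*((N:ℝ)+1)*ε ≤ δ := by
    have h4 : 4*d^2 ≤ (N:ℝ)*(s*δ) := by rwa [div_le_iff₀ (by positivity)] at hNb
    rw [hε_def, show (2*((N:ℝ)+1)*(d^2/((N:ℝ)^2*s))) = (2*((N:ℝ)+1)*d^2)/((N:ℝ)^2*s) by ring,
      div_le_iff₀ (by positivity)]
    nlinarith [mul_le_mul_of_nonneg_left h4 hN0.le,
      mul_nonneg (sq_nonneg d) (by linarith : (0:ℝ) ≤ (N:ℝ) - 1)]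
  -- the finite point set and the tree
  set X : Set (EuclideanSpace ℝ (Fin 2)) := insert x (insert y
      (⋃ i : Fin (N+1), {zpt x y ((i:ℕ) * d / N) ε, zpt x y ((i:ℕ) * d / N) (-ε)})) with hX_def
  set S : Set (EuclideanSpace ℝ (Fin 2)) := segment ℝ x y ∪
      ⋃ i : Fin (N+1), segment ℝ (zpt x y ((i:ℕ) * d / N) (-ε)) (zpt x y ((i:ℕ) * d / N) ε)
    with hS_def
  have hXfin : X.Finite := by
    refine (Set.Finite.insert _ (Set.Finite.insert _ ?_))
    exact Set.finite_iUnion fun i => (Set.finite_singleton _).insert _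
  have hXne : X.Nonempty := ⟨x, mem_insert _ _⟩
  have hXsub : closedNbhd (segment ℝ x y) s ⊆ closedNbhd X s := by
    intro p hp
    obtain ⟨ξ, hξ, hle⟩ := my_cover s hs x y hxy N hN1 ε hε0 hεs2 hsq p hp
    exact le_trans (infDist_le_dist_of_mem hξ) hle
  have hci_mem : ∀ i : Fin (N+1), (0:ℝ) ≤ (i:ℕ) * d / N ∧ (i:ℕ) * d / N ≤ d := by
    intro i
    constructor
    · positivity
    · rw [div_le_iff₀ hN0]
      have : ((i:ℕ):ℝ) ≤ N := by exact_mod_cast Fin.is_le i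
      nlinarith
  have hScomp : IsCompact S :=
    (my_isCompact_segment x y).union (isCompact_iUnion fun i => my_isCompact_segment _ _)
  have hmid : ∀ i : Fin (N+1), zpt x y ((i:ℕ) * d / N) 0 =
      midpoint ℝ (zpt x y ((i:ℕ) * d / N) (-ε)) (zpt x y ((i:ℕ) * d / N) ε) := by
    intro i
    rw [midpoint_eq_smul_add, invOf_eq_inv]
    simp only [zpt]
    module
  have hSconn : IsConnected S := by
    refine ⟨⟨x, mem_union_left _ (left_mem_segment ℝ x y)⟩, ?_⟩
    rw [hS_def, Set.union_iUnion]
    refine isPreconnected_iUnion ⟨x, mem_iInter.2 fun i => mem_union_left _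
      (left_mem_segment ℝ x y)⟩ fun i => ?_
    refine IsPreconnected.union (zpt x y ((i:ℕ) * d / N) 0) ?_ ?_
      (convex_segment x y).isPreconnected (convex_segment _ _).isPreconnected
    · exact mem_segment_zpt x y hxy (hci_mem i).1 (hci_mem i).2
    · rw [hmid i]; exact midpoint_mem_segment _ _
  have hXS : X ⊆ S := by
    intro ξ hξ
    simp only [hX_def, mem_insert_iff, mem_iUnion, mem_singleton_iff] at hξ
    rcases hξ with h | h | ⟨i, h | h⟩ <;> rw [h]
    · exact mem_union_left _ (left_mem_segment ℝ x y)
    · exact mem_union_left _ (right_mem_segment ℝ x y)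
    · exact mem_union_right _ (mem_iUnion.2 ⟨i, right_mem_segment ℝ _ _⟩)
    · exact mem_union_right _ (mem_iUnion.2 ⟨i, left_mem_segment ℝ _ _⟩)
  have hmeas : μH[1] S ≤ ENNReal.ofReal d + ENNReal.ofReal δ := by
    refine le_trans (measure_union_le _ _) ?_
    have h1 : μH[1] (segment ℝ x y) = ENNReal.ofReal d := by
      rw [hausdorffMeasure_segment, edist_dist]
    have h2 : μH[1] (⋃ i : Fin (N+1),
        segment ℝ (zpt x y ((i:ℕ) * d / N) (-ε)) (zpt x y ((i:ℕ) * d / N) ε)) ≤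
        ENNReal.ofReal δ := by
      refine le_trans (measure_iUnion_le _) ?_
      have h3 : ∀ i : Fin (N+1), μH[1]
          (segment ℝ (zpt x y ((i:ℕ) * d / N) (-ε)) (zpt x y ((i:ℕ) * d / N) ε)) =
          ENNReal.ofReal (2*ε) := by
        intro i
        rw [hausdorffMeasure_segment, edist_dist, spike_dist x y hxy _ ε hε0.le]
      rw [tsum_fintype]
      simp only [h3]
      rw [Finset.sum_const, Finset.card_univ, Fintype.card_fin, nsmul_eq_mul]
      rw [← ENNReal.ofReal_natCast, ← ENNReal.ofReal_mul (by positivity)]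
      refine ENNReal.ofReal_le_ofReal ?_
      have hNR : ((N:ℕ):ℝ) = (n:ℝ) + 1 := by rw [hN_def]; push_cast; ring
      have h5 : ((N:ℕ):ℝ) * ε = ((n:ℝ)+1) * ε := by rw [hNR]
      push_cast
      nlinarith [hsum, h5]
    exact add_le_add h1.le h2
  have hstep1 : spanLength (closedNbhd (segment ℝ x y) s) s ≤ steinerLength X := by
    unfold spanLength
    exact iInf_le_of_le X (iInf_le_of_le hXfin (iInf_le_of_le hXne (iInf_le _ hXsub)))
  have hstep2 : steinerLength X ≤ μH[1] S := by
    unfold steinerLength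
    exact iInf_le_of_le S (iInf_le_of_le hScomp (iInf_le_of_le hSconn (iInf_le _ hXS)))
  refine le_trans hstep1 (le_trans hstep2 (le_trans hmeas ?_))
  rw [hδ_def, ENNReal.ofReal_coe_nnreal]

/-- For `E` the closed `s`-neighborhood of a nondegenerate line segment,
`σ(E, s) = λ(E, s)`. -/
theorem spanLength_eq_mdLength_of_segment
    (s : ℝ) (hs : 0 < s) (x y : EuclideanSpace ℝ (Fin 2)) (hxy : x ≠ y)
    (E : Set (EuclideanSpace ℝ (Fin 2))) (hE : E = closedNbhd (segment ℝ x y) s) :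
    spanLength E s = mdLength E s := by
  subst hE
  refine le_antisymm ?_ (my_mdLength_le_spanLength _ _)
  exact le_trans (my_upper_bound s hs x y hxy) (my_lower_bound s hs x y hxy)
end

section
/- Let n ≥ 1, s > 0, R > 2s, and let E ⊆ ℝⁿ be a compact set contained in the closed ball B(0, R − 2s). If K ⊆ ℝⁿ is a nonempty compact connected set with E ⊆ B(K, s), then there exists a nonempty compact connected set K' ⊆ B(0, R) with E ⊆ B(K', s) and H¹(K') ≤ H¹(K). -/
open MeasureTheory Set Metric Filter ENNReal

/-- Radial projection onto the closed ball of radius `R` centered at the origin. -/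
noncomputable def ballProj {F : Type*} [NormedAddCommGroup F] [InnerProductSpace ℝ F]
    (R : ℝ) (x : F) : F :=
  if ‖x‖ ≤ R then x else (R / ‖x‖) • x

lemma ballProj_norm_le {F : Type*} [NormedAddCommGroup F] [InnerProductSpace ℝ F]
    {R : ℝ} (hR : 0 ≤ R) (x : F) : ‖ballProj R x‖ ≤ R := by
  unfold ballProj
  split
  · assumption
  · rename_i h
    push_neg at h
    have hx : 0 < ‖x‖ := lt_of_le_of_lt hR h
    rw [norm_smul, Real.norm_eq_abs, abs_of_nonneg (div_nonneg hR hx.le)]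
    rw [div_mul_cancel₀ _ hx.ne']

lemma ballProj_of_le {F : Type*} [NormedAddCommGroup F] [InnerProductSpace ℝ F]
    {R : ℝ} {x : F} (h : ‖x‖ ≤ R) : ballProj R x = x :=
  if_pos h

open scoped RealInnerProductSpace in
lemma ballProj_inner_le {F : Type*} [NormedAddCommGroup F] [InnerProductSpace ℝ F]
    {R : ℝ} (hR : 0 < R) (x : F) {z : F} (hz : ‖z‖ ≤ R) :
    ⟪x - ballProj R x, z - ballProj R x⟫ ≤ 0 := by
  unfold ballProj
  split
  · simp
  · rename_i h
    push_neg at h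
    have hx : 0 < ‖x‖ := hR.trans h
    have h1 : x - (R / ‖x‖) • x = (1 - R / ‖x‖) • x := by
      rw [sub_smul, one_smul]
    rw [h1, real_inner_smul_left]
    have hc : 0 ≤ 1 - R / ‖x‖ := by
      rw [sub_nonneg, div_le_one hx]; exact h.le
    apply mul_nonpos_of_nonneg_of_nonpos hc
    rw [inner_sub_right, real_inner_smul_right, real_inner_self_eq_norm_sq]
    have h2 : ⟪x, z⟫ ≤ ‖x‖ * ‖z‖ := real_inner_le_norm x z
    have h3 : R / ‖x‖ * ‖x‖ ^ 2 = R * ‖x‖ := by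
      field_simp
    nlinarith

open scoped RealInnerProductSpace in
lemma ballProj_lipschitz {F : Type*} [NormedAddCommGroup F] [InnerProductSpace ℝ F]
    {R : ℝ} (hR : 0 < R) : LipschitzWith 1 (ballProj (F := F) R) := by
  apply LipschitzWith.of_dist_le_mul
  intro x y
  rw [NNReal.coe_one, one_mul, dist_eq_norm, dist_eq_norm]
  set a := ballProj R x with ha
  set b := ballProj R y with hb
  have h1 : ⟪x - a, b - a⟫ ≤ 0 := ballProj_inner_le hR x (ballProj_norm_le hR.le y)
  have h2 : ⟪y - b, a - b⟫ ≤ 0 := ballProj_inner_le hR y (ballProj_norm_le hR.le x)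
  have expand : ⟪a - b, a - b⟫
      = ⟪x - y, a - b⟫ + ⟪x - a, b - a⟫ + ⟪y - b, a - b⟫ := by
    simp only [inner_sub_left, inner_sub_right]
    rw [real_inner_comm a x, real_inner_comm b x, real_inner_comm a y, real_inner_comm b y]
    ring
  have h4 : ‖a - b‖ ^ 2 ≤ ⟪x - y, a - b⟫ := by
    rw [← real_inner_self_eq_norm_sq]
    linarith [expand, h1, h2]
  have h5 : ⟪x - y, a - b⟫ ≤ ‖x - y‖ * ‖a - b‖ := real_inner_le_norm _ _
  nlinarith [norm_nonneg (a - b), norm_nonneg (x - y)]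

/-- Any compact connected `K` whose `s`-neighborhood covers `E ⊆ B(0, R - 2s)` can be
replaced by one contained in `B(0, R)` without increasing the `H¹` measure. -/
theorem exists_competitor_in_ball {n : ℕ} (hn : 1 ≤ n)
    (s R : ℝ) (hs : 0 < s) (hR : 2 * s < R)
    (E : Set (EuclideanSpace ℝ (Fin n))) (hEc : IsCompact E)
    (hER : E ⊆ Metric.closedBall (0 : EuclideanSpace ℝ (Fin n)) (R - 2 * s))
    (K : Set (EuclideanSpace ℝ (Fin n))) (hKne : K.Nonempty) (hKc : IsCompact K)
    (hKconn : IsConnected K) (hKcov : E ⊆ closedNbhd K s) :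
    ∃ K' : Set (EuclideanSpace ℝ (Fin n)), K'.Nonempty ∧ IsCompact K' ∧ IsConnected K' ∧
      K' ⊆ Metric.closedBall (0 : EuclideanSpace ℝ (Fin n)) R ∧
      E ⊆ closedNbhd K' s ∧ μH[1] K' ≤ μH[1] K := by
  have hRpos : 0 < R := by linarith
  set P : EuclideanSpace ℝ (Fin n) → EuclideanSpace ℝ (Fin n) := ballProj R with hP
  have hlip : LipschitzWith 1 P := ballProj_lipschitz hRpos
  refine ⟨P '' K, hKne.image P, hKc.image hlip.continuous,
    hKconn.image P hlip.continuous.continuousOn, ?_, ?_, ?_⟩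
  · rintro _ ⟨y, _, rfl⟩
    rw [mem_closedBall_zero_iff]
    exact ballProj_norm_le hRpos.le y
  · intro x hx
    have hxK : Metric.infDist x K ≤ s := hKcov hx
    have hxR : ‖x‖ ≤ R := by
      have := mem_closedBall_zero_iff.mp (hER hx)
      linarith
    obtain ⟨y, hyK, hyd⟩ := hKc.exists_infDist_eq_dist hKne x
    show Metric.infDist x (P '' K) ≤ s
    calc Metric.infDist x (P '' K) ≤ dist x (P y) :=
          Metric.infDist_le_dist_of_mem ⟨y, hyK, rfl⟩
      _ = dist (P x) (P y) := by rw [hP, ballProj_of_le hxR]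
      _ ≤ dist x y := by simpa using hlip.dist_le_mul x y
      _ = Metric.infDist x K := hyd.symm
      _ ≤ s := hxK
  · simpa using hlip.hausdorffMeasure_image_le (by norm_num : (0:ℝ) ≤ 1) K
end

section
/- Let L > 0, s > 0, and let n ≥ 1 be an integer. Set δ := (L/(2n))²/s and assume 2δ < s. Let I := [0, L] × {0} ⊆ ℝ² and define the finite set X := {(−δ, 0), (L + δ, 0)} ∪ {(kL/n, δ) : k = 0, …, n} ∪ {(kL/n, −δ) : k = 0, …, n}. Then B(I, s) ⊆ B(X, s). Moreover, the set Γ := ([−δ, L + δ] × {0}) ∪ ⋃_{k=0}^{n} ({kL/n} × [−δ, δ]) is compact, connected, contains X, and satisfies H¹(Γ) = L + (2n + 4)δ. -/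
open MeasureTheory Set Metric Filter ENNReal

noncomputable def hline' (c : ℝ) : ℝ → EuclideanSpace ℝ (Fin 2) := fun t => !₂[t, c]
noncomputable def vline' (c : ℝ) : ℝ → EuclideanSpace ℝ (Fin 2) := fun t => !₂[c, t]

lemma e2_dist' (p q : EuclideanSpace ℝ (Fin 2)) :
    dist p q = Real.sqrt ((p 0 - q 0)^2 + (p 1 - q 1)^2) := by
  rw [EuclideanSpace.dist_eq, Fin.sum_univ_two]
  simp [Real.dist_eq, sq_abs]

lemma e2_eta' (p : EuclideanSpace ℝ (Fin 2)) : p = !₂[p 0, p 1] := by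
  ext i; fin_cases i <;> rfl

lemma horiz_isometry' (c : ℝ) : Isometry (hline' c) := by
  apply Isometry.of_dist_eq
  intro a b
  rw [e2_dist']
  simp [hline', Real.dist_eq, Real.sqrt_sq_eq_abs]

lemma vert_isometry' (c : ℝ) : Isometry (vline' c) := by
  apply Isometry.of_dist_eq
  intro a b
  rw [e2_dist']
  simp [vline', Real.dist_eq, Real.sqrt_sq_eq_abs]

lemma horiz_image' (c a b : ℝ) :
    hline' c '' Set.Icc a b
      = {p : EuclideanSpace ℝ (Fin 2) | p 0 ∈ Set.Icc a b ∧ p 1 = c} := by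
  ext p
  constructor
  · rintro ⟨t, ht, rfl⟩; simpa [hline'] using ht
  · rintro ⟨h0, h1⟩
    refine ⟨p 0, h0, ?_⟩
    rw [show hline' c (p 0) = !₂[p 0, c] from rfl, ← h1]
    exact (e2_eta' p).symm

lemma vert_image' (c a b : ℝ) :
    vline' c '' Set.Icc a b
      = {p : EuclideanSpace ℝ (Fin 2) | p 0 = c ∧ p 1 ∈ Set.Icc a b} := by
  ext p
  constructor
  · rintro ⟨t, ht, rfl⟩; simpa [vline'] using ht
  · rintro ⟨h0, h1⟩
    refine ⟨p 1, h1, ?_⟩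
    rw [show vline' c (p 1) = !₂[c, p 1] from rfl, ← h0]
    exact (e2_eta' p).symm

lemma measure_horiz' (c a b : ℝ) :
    μH[1] {p : EuclideanSpace ℝ (Fin 2) | p 0 ∈ Set.Icc a b ∧ p 1 = c}
      = ENNReal.ofReal (b - a) := by
  rw [← horiz_image', (horiz_isometry' c).hausdorffMeasure_image (Or.inl zero_le_one),
    MeasureTheory.hausdorffMeasure_real, Real.volume_Icc]

lemma measure_vert' (c a b : ℝ) :
    μH[1] {p : EuclideanSpace ℝ (Fin 2) | p 0 = c ∧ p 1 ∈ Set.Icc a b}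
      = ENNReal.ofReal (b - a) := by
  rw [← vert_image', (vert_isometry' c).hausdorffMeasure_image (Or.inl zero_le_one),
    MeasureTheory.hausdorffMeasure_real, Real.volume_Icc]

section main
variable (L s : ℝ) (hL : 0 < L) (hs : 0 < s) (n : ℕ) (hn : 1 ≤ n)
    (δ : ℝ) (hδ0 : 0 < δ)

lemma main_part (hL : 0 < L) (hn : 1 ≤ n) (hδ0 : 0 < δ)
    (Γ : Set (EuclideanSpace ℝ (Fin 2)))
    (hΓ : Γ = {p : EuclideanSpace ℝ (Fin 2) | p 0 ∈ Set.Icc (-δ) (L + δ) ∧ p 1 = 0} ∪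
      (⋃ k : Fin (n + 1),
        {p : EuclideanSpace ℝ (Fin 2) |
          p 0 = ((k : ℕ) : ℝ) * L / n ∧ p 1 ∈ Set.Icc (-δ) δ})) :
    IsCompact Γ ∧ IsConnected Γ ∧ μH[1] Γ = ENNReal.ofReal (L + (2 * n + 4) * δ) := by
  have hn0 : (0:ℝ) < n := by exact_mod_cast hn
  set S : Set (EuclideanSpace ℝ (Fin 2)) :=
    {p | p 0 ∈ Set.Icc (-δ) (L + δ) ∧ p 1 = 0} with hS
  set P : Fin (n+1) → Set (EuclideanSpace ℝ (Fin 2)) :=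
    fun k => {p | p 0 = ((k : ℕ) : ℝ) * L / n ∧ p 1 ∈ Set.Icc (-δ) δ} with hP
  have hSimg : S = hline' 0 '' Set.Icc (-δ) (L + δ) := (horiz_image' 0 (-δ) (L+δ)).symm
  have hPimg : ∀ k, P k = vline' (((k:ℕ):ℝ) * L / n) '' Set.Icc (-δ) δ := fun k =>
    (vert_image' _ (-δ) δ).symm
  have hScomp : IsCompact S := by
    rw [hSimg]; exact isCompact_Icc.image (horiz_isometry' 0).continuous
  have hPcomp : ∀ k, IsCompact (P k) := fun k => by
    rw [hPimg k]; exact isCompact_Icc.image (vert_isometry' _).continuous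
  have hkmem : ∀ k : Fin (n+1), ((k:ℕ):ℝ) * L / n ∈ Set.Icc (-δ) (L + δ) := by
    intro k
    have hk : ((k:ℕ):ℝ) ≤ n := by exact_mod_cast Nat.lt_succ_iff.mp k.isLt
    have h1 : 0 ≤ ((k:ℕ):ℝ) * L / n := by positivity
    have h2 : ((k:ℕ):ℝ) * L / n ≤ L := by
      have hk0 : (0:ℝ) ≤ ((k:ℕ):ℝ) := Nat.cast_nonneg _
      rw [div_le_iff₀ hn0]; nlinarith
    constructor <;> [linarith; linarith]
  have hjoint : ∀ k : Fin (n+1), (vline' (((k:ℕ):ℝ) * L / n) 0) ∈ S ∩ P k := by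
    intro k
    constructor
    · exact ⟨hkmem k, rfl⟩
    · exact ⟨rfl, by constructor <;> simp [vline', hδ0.le] <;> linarith⟩
  have hΓ' : Γ = S ∪ ⋃ k, P k := hΓ
  refine ⟨?_, ?_, ?_⟩
  · rw [hΓ']
    exact hScomp.union (isCompact_iUnion hPcomp)
  · have hSconn : IsPreconnected S := by
      rw [hSimg]
      exact (isPreconnected_Icc).image _ (horiz_isometry' 0).continuous.continuousOn
    have hPconn : ∀ k, IsPreconnected (P k) := fun k => by
      rw [hPimg k]
      exact (isPreconnected_Icc).image _ (vert_isometry' _).continuous.continuousOn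
    constructor
    · rw [hΓ']
      exact ⟨hline' 0 0, Or.inl ⟨by simp [hline']; constructor <;> linarith, rfl⟩⟩
    · rw [hΓ', Set.union_iUnion]
      apply isPreconnected_iUnion
      · refine ⟨hline' 0 0, Set.mem_iInter.2 fun k => Or.inl ?_⟩
        exact ⟨by simp [hline']; constructor <;> linarith, rfl⟩
      · intro k
        exact IsPreconnected.union _ (hjoint k).1 (hjoint k).2 hSconn (hPconn k)
  · rw [hΓ']
    haveI := MeasureTheory.Measure.nullSingletonClass_hausdorff (EuclideanSpace ℝ (Fin 2)) one_pos
    have hSmeas : μH[1] S = ENNReal.ofReal (L + 2*δ) := by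
      rw [hS, measure_horiz']
      congr 1; ring
    have hPmeas : ∀ k : Fin (n+1), μH[1] (P k) = ENNReal.ofReal (2*δ) := fun k => by
      rw [hP]
      rw [measure_vert']
      congr 1; ring
    have hPdisj : Pairwise (Function.onFun Disjoint P) := by
      intro j k hjk
      rw [Function.onFun, Set.disjoint_left]
      rintro p ⟨hp0, -⟩ ⟨hq0, -⟩
      apply hjk
      have heq : ((j:ℕ):ℝ) * L / n = ((k:ℕ):ℝ) * L / n := by rw [← hp0, hq0]
      have hjkr : ((j:ℕ):ℝ) = ((k:ℕ):ℝ) := by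
        field_simp [hL.ne', hn0.ne'] at heq
        exact_mod_cast heq
      have : (j:ℕ) = (k:ℕ) := by exact_mod_cast hjkr
      exact Fin.ext this
    have hPmeasurable : ∀ k, NullMeasurableSet (P k) (μH[1]) :=
      fun k => ((hPcomp k).isClosed.measurableSet).nullMeasurableSet
    have hUP : μH[1] (⋃ k, P k) = ENNReal.ofReal ((n+1) * (2*δ)) := by
      rw [measure_iUnion₀ (hPdisj.mono fun {j k} h => h.aedisjoint) hPmeasurable]
      simp only [hPmeas]
      rw [tsum_fintype, Finset.sum_const, Finset.card_univ, Fintype.card_fin, nsmul_eq_mul,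
        ← ENNReal.ofReal_natCast (n+1), ← ENNReal.ofReal_mul (by positivity)]
      congr 1; push_cast; ring
    have hnull : μH[1] (S ∩ ⋃ k, P k) = 0 := by
      rw [Set.inter_iUnion]
      refine measure_iUnion_null fun k => measure_mono_null ?_
        (measure_singleton (vline' (((k:ℕ):ℝ) * L / n) 0))
      rintro p ⟨⟨-, h1⟩, h0, -⟩
      have : p = vline' (((k:ℕ):ℝ) * L / n) 0 := by
        rw [e2_eta' p, h0, h1]; rfl
      exact this
    rw [measure_union₀ (MeasurableSet.iUnion fun k =>
        (hPcomp k).isClosed.measurableSet).nullMeasurableSet hnull,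
      hSmeas, hUP, ← ENNReal.ofReal_add (by positivity) (by positivity)]
    congr 1; push_cast; ring
end main

lemma exists_k (L : ℝ) (hL : 0 < L) (n : ℕ) (hn : 1 ≤ n) (ε a : ℝ) (hε : 0 ≤ ε)
    (ha : -ε ≤ a) (ha2 : a ≤ L + ε) :
    ∃ k : ℕ, k ≤ n ∧ (a - k * L / n)^2 ≤ max (ε^2) ((L/(2*n))^2) := by
  have hn0 : (0:ℝ) < n := by exact_mod_cast hn
  rcases le_or_gt a 0 with h0 | h0
  · refine ⟨0, Nat.zero_le n, le_max_of_le_left ?_⟩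
    have : a - (0:ℕ) * L / n = a := by push_cast; ring
    rw [this]; nlinarith
  rcases le_or_gt L a with h1 | h1
  · refine ⟨n, le_rfl, le_max_of_le_left ?_⟩
    have : (n:ℝ) * L / n = L := by field_simp
    rw [this]; nlinarith
  · set t := a * n / L with ht
    have ht0 : 0 < t := by positivity
    have htn : t < n := by
      rw [ht, div_lt_iff₀ hL]; nlinarith
    refine ⟨⌊t + 1/2⌋₊, ?_, le_max_of_le_right ?_⟩
    · have : (⌊t + 1/2⌋₊ : ℝ) < n + 1 := by
        calc (⌊t + 1/2⌋₊ : ℝ) ≤ t + 1/2 := Nat.floor_le (by linarith)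
        _ < n + 1 := by linarith
      exact_mod_cast Nat.lt_succ_iff.mp (by exact_mod_cast this)
    · set k := ⌊t + 1/2⌋₊
      have hk1 : (k:ℝ) ≤ t + 1/2 := Nat.floor_le (by linarith)
      have hk2 : t + 1/2 < k + 1 := Nat.lt_floor_add_one _
      have haa : a = t * L / n := by rw [ht]; field_simp
      rw [haa]
      have h3 : t * L / n - k * L / n = (t - k) * (L / n) := by ring
      have h4 : (L / (2*n))^2 = (1/2)^2 * (L/n)^2 := by ring
      rw [h3, h4, mul_pow]
      have h5 : (t - (k:ℝ))^2 ≤ (1/2)^2 := by nlinarith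
      have h6 : (0:ℝ) < (L/n)^2 := by positivity
      nlinarith

lemma key_ineq (s δ u b : ℝ) (hs : 0 < s) (hδ : 0 < δ) (hδs : 2*δ < s)
    (hu : u ≤ δ * s) (hb : 0 ≤ b) (hbs : b ≤ s) : u + (b - δ)^2 ≤ s^2 := by
  nlinarith [mul_nonneg hb (sub_nonneg.2 hbs), sq_nonneg (b - δ), mul_pos hδ hs]

lemma cover (L s : ℝ) (hL : 0 < L) (hs : 0 < s) (n : ℕ) (hn : 1 ≤ n)
    (δ : ℝ) (hδ : δ = (L / (2 * n)) ^ 2 / s) (hδs : 2 * δ < s)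
    (I : Set (EuclideanSpace ℝ (Fin 2)))
    (hI : I = {p : EuclideanSpace ℝ (Fin 2) | p 0 ∈ Set.Icc 0 L ∧ p 1 = 0})
    (X : Set (EuclideanSpace ℝ (Fin 2)))
    (hX : X = ({!₂[-δ, 0], !₂[L + δ, 0]} : Set (EuclideanSpace ℝ (Fin 2))) ∪
      (⋃ k : Fin (n + 1),
        ({!₂[((k : ℕ) : ℝ) * L / n, δ], !₂[((k : ℕ) : ℝ) * L / n, -δ]} :
          Set (EuclideanSpace ℝ (Fin 2))))) :
    closedNbhd I s ⊆ closedNbhd X s := by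
  have hn0 : (0:ℝ) < n := by exact_mod_cast hn
  have hδ0 : 0 < δ := by rw [hδ]; positivity
  intro x hx
  have hx' : Metric.infDist x I ≤ s := hx
  have hIc : IsCompact I := by
    rw [hI, ← horiz_image' 0 0 L]
    exact isCompact_Icc.image (horiz_isometry' 0).continuous
  have hIne : I.Nonempty := by
    rw [hI]
    exact ⟨hline' 0 0, by constructor <;> simp [hline', hL.le]⟩
  obtain ⟨p, hpI, hpd⟩ := hIc.exists_infDist_eq_dist hIne x
  rw [hI] at hpI
  obtain ⟨⟨hc0, hcL⟩, hp1⟩ := hpI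
  set a := x 0 with hxa
  set b := x 1 with hxb
  set c := p 0 with hpc
  have hxp : (a - c)^2 + b^2 ≤ s^2 := by
    have h1 : dist x p ≤ s := by rw [← hpd]; exact hx'
    rw [e2_dist', hp1, sub_zero] at h1
    nlinarith [Real.sq_sqrt (show (0:ℝ) ≤ (a-c)^2 + b^2 by positivity),
      Real.sqrt_nonneg ((a-c)^2 + b^2)]
  have key : ∀ (u v : ℝ), (!₂[u, v] : EuclideanSpace ℝ (Fin 2)) ∈ X →
      (a - u)^2 + (b - v)^2 ≤ s^2 → x ∈ closedNbhd X s := by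
    intro u v hq h
    show Metric.infDist x X ≤ s
    refine le_trans (Metric.infDist_le_dist_of_mem hq) ?_
    rw [e2_dist']
    have h0 : (!₂[u, v] : EuclideanSpace ℝ (Fin 2)) 0 = u := rfl
    have h1 : (!₂[u, v] : EuclideanSpace ℝ (Fin 2)) 1 = v := rfl
    rw [h0, h1]
    calc Real.sqrt ((a - u)^2 + (b - v)^2) ≤ Real.sqrt (s^2) := Real.sqrt_le_sqrt h
      _ = s := Real.sqrt_sq hs.le
  rcases le_or_gt a (-(δ/2)) with hcase | hcase
  · refine key (-δ) 0 ?_ ?_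
    · rw [hX]; left; exact Set.mem_insert _ _
    · nlinarith [mul_nonneg (by linarith : (0:ℝ) ≤ c + δ)
        (by linarith : (0:ℝ) ≤ c - δ - 2*a)]
  rcases le_or_gt (L + δ/2) a with hcase2 | hcase2
  · refine key (L + δ) 0 ?_ ?_
    · rw [hX]; left; exact Set.mem_insert_of_mem _ rfl
    · nlinarith [mul_nonneg (by linarith : (0:ℝ) ≤ L + δ - c)
        (by linarith : (0:ℝ) ≤ 2*a - c - L - δ)]
  · obtain ⟨k, hkn, hksq⟩ := exists_k L hL n hn (δ/2) a (by linarith)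
      (by linarith) (by linarith)
    have hLn : (L/(2*n))^2 = δ * s := by rw [hδ]; field_simp
    have hksq' : (a - k * L / n)^2 ≤ δ * s := by
      refine le_trans hksq (max_le ?_ (le_of_eq hLn))
      nlinarith
    have hbs2 : b^2 ≤ s^2 := by nlinarith [sq_nonneg (a - c)]
    have habs : |b| ≤ s := abs_le_of_sq_le_sq hbs2 hs.le
    have hmemk : ∀ v : ℝ, (v = δ ∨ v = -δ) →
        (!₂[(k:ℝ) * L / n, v] : EuclideanSpace ℝ (Fin 2)) ∈ X := by
      intro v hv
      rw [hX]; right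
      refine Set.mem_iUnion.2 ⟨⟨k, by omega⟩, ?_⟩
      rcases hv with rfl | rfl
      · exact Set.mem_insert _ _
      · exact Set.mem_insert_of_mem _ rfl
    rcases le_or_gt 0 b with hb | hb
    · refine key ((k:ℝ) * L / n) δ (hmemk δ (Or.inl rfl)) ?_
      have habs' : b ≤ s := le_trans (le_abs_self b) habs
      have := key_ineq s δ ((a - k * L / n)^2) b hs hδ0 hδs hksq' hb habs'
      linarith [sq_nonneg (a - k * L / n)]
    · refine key ((k:ℝ) * L / n) (-δ) (hmemk (-δ) (Or.inr rfl)) ?_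
      have habs' : -b ≤ s := le_trans (neg_le_abs b) habs
      have := key_ineq s δ ((a - k * L / n)^2) (-b) hs hδ0 hδs hksq' (by linarith) habs'
      have heq : (b - (-δ))^2 = (-b - δ)^2 := by ring
      rw [heq]; linarith

/-- The explicit prong construction covering the `s`-neighborhood of a horizontal
segment of length `L`: the `s`-balls at the displaced points cover `B(I, s)`, and
the segment together with its prongs is a compact connected set of
`H¹`-measure `L + (2n + 4)δ` containing the displaced points. -/
theorem segment_prong_construction
    (L s : ℝ) (hL : 0 < L) (hs : 0 < s) (n : ℕ) (hn : 1 ≤ n)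
    (δ : ℝ) (hδ : δ = (L / (2 * n)) ^ 2 / s) (hδs : 2 * δ < s)
    (I : Set (EuclideanSpace ℝ (Fin 2)))
    (hI : I = {p : EuclideanSpace ℝ (Fin 2) | p 0 ∈ Set.Icc 0 L ∧ p 1 = 0})
    (X : Set (EuclideanSpace ℝ (Fin 2)))
    (hX : X = ({!₂[-δ, 0], !₂[L + δ, 0]} : Set (EuclideanSpace ℝ (Fin 2))) ∪
      (⋃ k : Fin (n + 1),
        ({!₂[((k : ℕ) : ℝ) * L / n, δ], !₂[((k : ℕ) : ℝ) * L / n, -δ]} :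
          Set (EuclideanSpace ℝ (Fin 2)))))
    (Γ : Set (EuclideanSpace ℝ (Fin 2)))
    (hΓ : Γ = {p : EuclideanSpace ℝ (Fin 2) | p 0 ∈ Set.Icc (-δ) (L + δ) ∧ p 1 = 0} ∪
      (⋃ k : Fin (n + 1),
        {p : EuclideanSpace ℝ (Fin 2) |
          p 0 = ((k : ℕ) : ℝ) * L / n ∧ p 1 ∈ Set.Icc (-δ) δ})) :
    closedNbhd I s ⊆ closedNbhd X s ∧
    IsCompact Γ ∧ IsConnected Γ ∧ X ⊆ Γ ∧
    μH[1] Γ = ENNReal.ofReal (L + (2 * n + 4) * δ) := by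
  have hn0 : (0:ℝ) < n := by exact_mod_cast hn
  have hδ0 : 0 < δ := by rw [hδ]; positivity
  obtain ⟨hcomp, hconn, hmeas⟩ := main_part L n δ hL hn hδ0 Γ hΓ
  refine ⟨cover L s hL hs n hn δ hδ hδs I hI X hX, hcomp, hconn, ?_, hmeas⟩
  rw [hX, hΓ]
  rintro p (h | h)
  · left
    rcases h with rfl | rfl
    · exact ⟨⟨by simp, by simp; linarith⟩, rfl⟩
    · exact ⟨⟨by simp; linarith, by simp⟩, rfl⟩
  · right
    obtain ⟨k, hk⟩ := Set.mem_iUnion.1 h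
    rcases hk with rfl | rfl
    · exact Set.mem_iUnion.2 ⟨k, rfl, by simp; linarith, by simp⟩
    · exact Set.mem_iUnion.2 ⟨k, rfl, by simp, by simp; linarith⟩
end

section
/- Let s > 0, let ν < τ be reals, set ρ := τ − ν, let μ ≥ 0, let n ≥ 1 be an integer, and set δ := (ρ/(2n))²/s. Assume μ + 2δ < s and μ² ≤ 4δ(2s − δ). Let R := [ν, τ] × [−μ/2, μ/2] ⊆ ℝ² and define the finite set X := {(ν − δ, μ/2), (ν − δ, −μ/2), (τ + δ, μ/2), (τ + δ, −μ/2)} ∪ {(ν + kρ/n, δ + μ/2) : k = 0, …, n} ∪ {(ν + kρ/n, −(δ + μ/2)) : k = 0, …, n}. Then B(R, s) ⊆ B(X, s). -/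
open MeasureTheory Set Metric Filter ENNReal

section ProngAux

/-- Choice of a grid index within `ρ/(2n)` of a point of `[ν, τ]`. -/
lemma prong_grid_choice (ν τ ρ a : ℝ) (n : ℕ) (hντ : ν < τ) (hρ : ρ = τ - ν) (hn : 1 ≤ n)
    (hA : ν ≤ a) (hA' : a ≤ τ) :
    ∃ k : ℕ, k ≤ n ∧ (a - (ν + (k : ℝ) * ρ / n)) ^ 2 ≤ (ρ / (2 * n)) ^ 2 := by
  have hn0 : (0 : ℝ) < (n : ℝ) := by exact_mod_cast Nat.pos_of_ne_zero (by omega)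
  have hρ0 : (0 : ℝ) < ρ := by rw [hρ]; linarith
  set t : ℝ := (a - ν) * n / ρ with ht
  have ht0 : 0 ≤ t := by
    apply div_nonneg _ (le_of_lt hρ0); nlinarith
  have htn : t ≤ (n : ℝ) := by
    rw [ht, div_le_iff₀ hρ0]; nlinarith
  set k' : ℤ := ⌊t + 1 / 2⌋ with hk'
  have hk'0 : 0 ≤ k' := Int.le_floor.mpr (by push_cast; linarith)
  have hk'n : k' ≤ (n : ℤ) := by
    have : k' < (n : ℤ) + 1 := by
      rw [hk', Int.floor_lt]; push_cast; linarith
    omega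
  have hkk : ((k'.toNat : ℕ) : ℝ) = (k' : ℝ) := by
    exact_mod_cast congrArg (Int.cast : ℤ → ℝ) (Int.toNat_of_nonneg hk'0)
  have hfl1 : (k' : ℝ) ≤ t + 1 / 2 := Int.floor_le _
  have hfl2 : t + 1 / 2 < (k' : ℝ) + 1 := Int.lt_floor_add_one _
  have ha' : a - ν = t * ρ / n := by rw [ht]; field_simp
  refine ⟨k'.toNat, by omega, ?_⟩
  have he : a - (ν + ((k'.toNat : ℕ) : ℝ) * ρ / n) = (t - (k' : ℝ)) * (ρ / n) := by
    have ha2 : a = ν + t * ρ / ↑n := by linarith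
    rw [hkk, ha2]; ring
  have htk : (t - (k' : ℝ)) ^ 2 ≤ 1 / 4 := by nlinarith
  rw [he]
  have h2 : (t - (k' : ℝ)) ^ 2 * (ρ / n) ^ 2 ≤ (1 / 4) * (ρ / n) ^ 2 :=
    mul_le_mul_of_nonneg_right htk (by positivity)
  calc ((t - (k' : ℝ)) * (ρ / n)) ^ 2 = (t - (k' : ℝ)) ^ 2 * (ρ / n) ^ 2 := by ring
    _ ≤ (1 / 4) * (ρ / n) ^ 2 := h2
    _ = (ρ / (2 * n)) ^ 2 := by ring

set_option maxHeartbeats 1000000 in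
/-- Master case analysis over the reals, for the upper half plane `0 ≤ b`. -/
lemma prong_master (s ν τ μ ρ : ℝ) (n : ℕ) (δ a b : ℝ)
    (hs : 0 < s) (hντ : ν < τ) (hμ : 0 ≤ μ) (hρ : ρ = τ - ν) (hn : 1 ≤ n)
    (hδ : δ = (ρ / (2 * n)) ^ 2 / s)
    (h1 : μ + 2 * δ < s) (h2 : μ ^ 2 ≤ 4 * δ * (2 * s - δ))
    (hb : 0 ≤ b)
    (H : (a - max ν (min a τ)) ^ 2 + (b - min b (μ / 2)) ^ 2 ≤ s ^ 2) :
    ∃ p q : ℝ,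
      (((p = ν - δ ∨ p = τ + δ) ∧ q = μ / 2) ∨
        ((∃ k : ℕ, k ≤ n ∧ p = ν + (k : ℝ) * ρ / n) ∧ q = δ + μ / 2)) ∧
      (a - p) ^ 2 + (b - q) ^ 2 ≤ s ^ 2 := by
  have hn0 : (0 : ℝ) < (n : ℝ) := by exact_mod_cast Nat.pos_of_ne_zero (by omega)
  have hρ0 : (0 : ℝ) < ρ := by rw [hρ]; linarith
  have hδ0 : (0 : ℝ) < δ := by
    rw [hδ]; exact div_pos (pow_pos (div_pos hρ0 (by positivity)) 2) hs
  have hδs : δ * s = (ρ / (2 * n)) ^ 2 := by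
    rw [hδ]; field_simp
  have hδs2 : 2 * δ < s := by linarith
  rcases le_total a ν with hA | hA
  · -- left region : a ≤ ν
    have hc : max ν (min a τ) = ν := by
      rw [min_eq_left (le_of_lt (lt_of_le_of_lt hA hντ)), max_eq_left hA]
    rw [hc] at H
    rcases le_total b (μ / 2) with hB | hB
    · -- b ≤ μ/2 : use corner (ν - δ, μ/2); needs h2
      have hd : min b (μ / 2) = b := min_eq_left hB
      rw [hd] at H
      have hbb : (b - b) ^ 2 = 0 := by ring
      have hu : (ν - a) ^ 2 ≤ s ^ 2 := by nlinarith
      have hus : ν - a ≤ s := by nlinarith [sq_nonneg (ν - a - s)]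
      refine ⟨ν - δ, μ / 2, Or.inl ⟨Or.inl rfl, rfl⟩, ?_⟩
      have key : (a - (ν - δ)) ^ 2 ≤ (s - δ) ^ 2 := by
        rcases le_total (ν - a) δ with h | h
        · nlinarith
        · nlinarith
      nlinarith [sq_nonneg (b - μ / 2)]
    · -- b > μ/2
      have hd : min b (μ / 2) = μ / 2 := min_eq_right hB
      rw [hd] at H
      rcases le_total (δ / 2) (ν - a) with h | h
      · refine ⟨ν - δ, μ / 2, Or.inl ⟨Or.inl rfl, rfl⟩, ?_⟩
        nlinarith
      · rcases le_total (δ / 2) (b - μ / 2) with h' | h'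
        · refine ⟨ν + (0 : ℝ) * ρ / n, δ + μ / 2,
            Or.inr ⟨⟨0, Nat.zero_le n, by norm_num⟩, rfl⟩, ?_⟩
          have hp : ν + (0 : ℝ) * ρ / n = ν := by ring
          rw [hp]
          nlinarith
        · refine ⟨ν - δ, μ / 2, Or.inl ⟨Or.inl rfl, rfl⟩, ?_⟩
          nlinarith
  · rcases le_total τ a with hA' | hA'
    · -- right region : τ ≤ a
      have hc : max ν (min a τ) = τ := by
        rw [min_eq_right hA', max_eq_right (le_of_lt hντ)]
      rw [hc] at H
      have hτp : ν + (n : ℝ) * ρ / n = τ := by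
        field_simp [hρ]
        linarith
      rcases le_total b (μ / 2) with hB | hB
      · have hd : min b (μ / 2) = b := min_eq_left hB
        rw [hd] at H
        have hbb : (b - b) ^ 2 = 0 := by ring
        have hu : (a - τ) ^ 2 ≤ s ^ 2 := by nlinarith
        have hus : a - τ ≤ s := by nlinarith [sq_nonneg (a - τ - s)]
        refine ⟨τ + δ, μ / 2, Or.inl ⟨Or.inr rfl, rfl⟩, ?_⟩
        have key : (a - (τ + δ)) ^ 2 ≤ (s - δ) ^ 2 := by
          rcases le_total (a - τ) δ with h | h
          · nlinarith
          · nlinarith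
        nlinarith [sq_nonneg (b - μ / 2)]
      · have hd : min b (μ / 2) = μ / 2 := min_eq_right hB
        rw [hd] at H
        rcases le_total (δ / 2) (a - τ) with h | h
        · refine ⟨τ + δ, μ / 2, Or.inl ⟨Or.inr rfl, rfl⟩, ?_⟩
          nlinarith
        · rcases le_total (δ / 2) (b - μ / 2) with h' | h'
          · refine ⟨ν + (n : ℝ) * ρ / n, δ + μ / 2,
              Or.inr ⟨⟨n, le_refl n, rfl⟩, rfl⟩, ?_⟩
            rw [hτp]
            nlinarith
          · refine ⟨τ + δ, μ / 2, Or.inl ⟨Or.inr rfl, rfl⟩, ?_⟩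
            nlinarith
    · -- middle region : ν ≤ a ≤ τ : grid point
      have hc : max ν (min a τ) = a := by
        rw [min_eq_left hA', max_eq_right hA]
      rw [hc] at H
      have haa : (a - a) ^ 2 = 0 := by ring
      have hbs : b ≤ μ / 2 + s := by
        rcases le_total b (μ / 2) with hB | hB
        · linarith
        · have hd : min b (μ / 2) = μ / 2 := min_eq_right hB
          rw [hd] at H
          nlinarith [sq_nonneg (b - μ / 2 - s)]
      obtain ⟨k, hkn, hk⟩ := prong_grid_choice ν τ ρ a n hντ hρ hn hA hA'
      refine ⟨ν + (k : ℝ) * ρ / n, δ + μ / 2, Or.inr ⟨⟨k, hkn, rfl⟩, rfl⟩, ?_⟩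
      rw [← hδs] at hk
      have hx2 : (b - (δ + μ / 2)) ^ 2 ≤ s ^ 2 - δ * s := by
        rcases le_total b (δ + μ / 2) with h | h
        · nlinarith
        · nlinarith
      linarith

end ProngAux

section EucAux

lemma euc_dist_eq_sqrt (x y : EuclideanSpace ℝ (Fin 2)) :
    dist x y = Real.sqrt ((x 0 - y 0) ^ 2 + (x 1 - y 1) ^ 2) := by
  rw [EuclideanSpace.dist_eq]
  congr 1
  simp [Fin.sum_univ_two, Real.dist_eq, sq_abs]

lemma euc_dist_le_of_sq (x y : EuclideanSpace ℝ (Fin 2)) {s : ℝ} (hs : 0 ≤ s)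
    (h : (x 0 - y 0) ^ 2 + (x 1 - y 1) ^ 2 ≤ s ^ 2) : dist x y ≤ s := by
  rw [euc_dist_eq_sqrt]
  calc Real.sqrt ((x 0 - y 0) ^ 2 + (x 1 - y 1) ^ 2) ≤ Real.sqrt (s ^ 2) :=
        Real.sqrt_le_sqrt h
    _ = s := Real.sqrt_sq hs

lemma euc_sq_le_of_dist (x y : EuclideanSpace ℝ (Fin 2)) {s : ℝ}
    (h : dist x y ≤ s) : (x 0 - y 0) ^ 2 + (x 1 - y 1) ^ 2 ≤ s ^ 2 := by
  rw [euc_dist_eq_sqrt] at h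
  have h0 : (0 : ℝ) ≤ (x 0 - y 0) ^ 2 + (x 1 - y 1) ^ 2 := by positivity
  calc (x 0 - y 0) ^ 2 + (x 1 - y 1) ^ 2
      = Real.sqrt ((x 0 - y 0) ^ 2 + (x 1 - y 1) ^ 2) ^ 2 := (Real.sq_sqrt h0).symm
    _ ≤ s ^ 2 := pow_le_pow_left₀ (Real.sqrt_nonneg _) h 2

lemma clamp_sq_le (a lo hi y : ℝ) (h1 : lo ≤ y) (h2 : y ≤ hi) :
    (a - max lo (min a hi)) ^ 2 ≤ (a - y) ^ 2 := by
  rcases le_total a lo with h | h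
  · rw [min_eq_left (h.trans (h1.trans h2)), max_eq_left h]
    nlinarith
  · rcases le_total a hi with h' | h'
    · rw [min_eq_left h', max_eq_right h]
      nlinarith [sq_nonneg (a - y)]
    · rw [min_eq_right h', max_eq_right (h1.trans h2)]
      nlinarith

end EucAux

set_option maxHeartbeats 1000000 in
/-- The prong construction for a thin rectangle: the `s`-balls centered at the finitely
many displaced points cover the `s`-neighborhood of the rectangle
`R = [ν, τ] × [−μ/2, μ/2]`. -/
theorem rectangle_prong_cover
    (s ν τ μ : ℝ) (hs : 0 < s) (hντ : ν < τ) (hμ : 0 ≤ μ)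
    (ρ : ℝ) (hρ : ρ = τ - ν) (n : ℕ) (hn : 1 ≤ n)
    (δ : ℝ) (hδ : δ = (ρ / (2 * n)) ^ 2 / s)
    (h1 : μ + 2 * δ < s) (h2 : μ ^ 2 ≤ 4 * δ * (2 * s - δ))
    (R : Set (EuclideanSpace ℝ (Fin 2)))
    (hR : R = {p : EuclideanSpace ℝ (Fin 2) |
      p 0 ∈ Set.Icc ν τ ∧ p 1 ∈ Set.Icc (-(μ / 2)) (μ / 2)})
    (X : Set (EuclideanSpace ℝ (Fin 2)))
    (hX : X = ({!₂[ν - δ, μ / 2], !₂[ν - δ, -(μ / 2)], !₂[τ + δ, μ / 2], !₂[τ + δ, -(μ / 2)]} :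
        Set (EuclideanSpace ℝ (Fin 2))) ∪
      (⋃ k : Fin (n + 1),
        ({!₂[ν + ((k : ℕ) : ℝ) * ρ / n, δ + μ / 2],
          !₂[ν + ((k : ℕ) : ℝ) * ρ / n, -(δ + μ / 2)]} :
          Set (EuclideanSpace ℝ (Fin 2))))) :
    closedNbhd R s ⊆ closedNbhd X s := by
  intro x hx
  simp only [closedNbhd, Set.mem_setOf_eq] at hx ⊢
  -- abbreviations for the coordinates and the nearest point of R
  have hc : max ν (min (x 0) τ) ∈ Set.Icc ν τ :=
    ⟨le_max_left _ _, max_le (le_of_lt hντ) (min_le_right _ _)⟩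
  have hd : max (-(μ / 2)) (min (x 1) (μ / 2)) ∈ Set.Icc (-(μ / 2)) (μ / 2) :=
    ⟨le_max_left _ _, max_le (by linarith) (min_le_right _ _)⟩
  set c := max ν (min (x 0) τ) with hcdef
  set d := max (-(μ / 2)) (min (x 1) (μ / 2)) with hddef
  have hPmem : (!₂[c, d] : EuclideanSpace ℝ (Fin 2)) ∈ R := by
    rw [hR]; exact ⟨hc, hd⟩
  have hRne : R.Nonempty := ⟨_, hPmem⟩
  have hmin : ∀ y ∈ R, dist x (!₂[c, d] : EuclideanSpace ℝ (Fin 2)) ≤ dist x y := by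
    intro y hy
    rw [hR] at hy
    obtain ⟨hy0, hy1⟩ := hy
    rw [euc_dist_eq_sqrt, euc_dist_eq_sqrt]
    apply Real.sqrt_le_sqrt
    have e0 : (!₂[c, d] : EuclideanSpace ℝ (Fin 2)) 0 = c := rfl
    have e1 : (!₂[c, d] : EuclideanSpace ℝ (Fin 2)) 1 = d := rfl
    rw [e0, e1, hcdef, hddef]
    have g0 := clamp_sq_le (x 0) ν τ (y 0) hy0.1 hy0.2
    have g1 := clamp_sq_le (x 1) (-(μ / 2)) (μ / 2) (y 1) hy1.1 hy1.2
    linarith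
  have hdist : dist x (!₂[c, d] : EuclideanSpace ℝ (Fin 2)) ≤ Metric.infDist x R := by
    by_contra hcon
    push_neg at hcon
    obtain ⟨y, hyR, hylt⟩ := (Metric.infDist_lt_iff hRne).1 hcon
    exact absurd (hmin y hyR) (not_le.2 hylt)
  have H : (x 0 - c) ^ 2 + (x 1 - d) ^ 2 ≤ s ^ 2 := by
    have := euc_sq_le_of_dist x (!₂[c, d] : EuclideanSpace ℝ (Fin 2)) (hdist.trans hx)
    simpa using this
  -- helper to conclude from a covering point
  have conclude : ∀ P : EuclideanSpace ℝ (Fin 2), P ∈ X →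
      (x 0 - P 0) ^ 2 + (x 1 - P 1) ^ 2 ≤ s ^ 2 → Metric.infDist x X ≤ s := by
    intro P hPX hsq
    exact le_trans (Metric.infDist_le_dist_of_mem hPX) (euc_dist_le_of_sq x P hs.le hsq)
  rcases le_total 0 (x 1) with hb | hb
  · -- upper half-plane
    have hdval : d = min (x 1) (μ / 2) := by
      rw [hddef]
      exact max_eq_right (le_min (by linarith) (by linarith))
    rw [hdval] at H
    obtain ⟨p, q, hcond, hineq⟩ :=
      prong_master s ν τ μ ρ n δ (x 0) (x 1) hs hντ hμ hρ hn hδ h1 h2 hb H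
    rcases hcond with ⟨hp, hq⟩ | ⟨⟨k, hkn, hp⟩, hq⟩
    · refine conclude !₂[p, q] ?_ (by simpa using hineq)
      rw [hX]
      apply Set.mem_union_left
      subst hq
      rcases hp with hp | hp <;> subst hp <;> simp
    · refine conclude !₂[p, q] ?_ (by simpa using hineq)
      rw [hX]
      apply Set.mem_union_right
      rw [Set.mem_iUnion]
      refine ⟨⟨k, by omega⟩, ?_⟩
      subst hp; subst hq
      simp
  · -- lower half-plane: reflect
    have hmin : min (x 1) (μ / 2) = x 1 := min_eq_left (by linarith)
    have hdval : min (-(x 1)) (μ / 2) = -d := by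
      rw [hddef, hmin]
      rcases le_total (-(μ / 2)) (x 1) with h | h
      · rw [max_eq_right h, min_eq_left (by linarith)]
      · rw [max_eq_left h, min_eq_right (by linarith)]; ring
    have H' : (x 0 - c) ^ 2 + (-(x 1) - min (-(x 1)) (μ / 2)) ^ 2 ≤ s ^ 2 := by
      rw [hdval]
      have : (-(x 1) - -d) ^ 2 = (x 1 - d) ^ 2 := by ring
      rw [this]; exact H
    obtain ⟨p, q, hcond, hineq⟩ :=
      prong_master s ν τ μ ρ n δ (x 0) (-(x 1)) hs hντ hμ hρ hn hδ h1 h2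
        (by linarith) H'
    have hineq' : (x 0 - p) ^ 2 + (x 1 - (-q)) ^ 2 ≤ s ^ 2 := by
      have : (x 1 - (-q)) ^ 2 = (-(x 1) - q) ^ 2 := by ring
      rw [this]; exact hineq
    rcases hcond with ⟨hp, hq⟩ | ⟨⟨k, hkn, hp⟩, hq⟩
    · refine conclude !₂[p, -q] ?_ (by simpa using hineq')
      rw [hX]
      apply Set.mem_union_left
      subst hq
      rcases hp with hp | hp <;> subst hp <;> simp
    · refine conclude !₂[p, -q] ?_ (by simpa using hineq')
      rw [hX]
      apply Set.mem_union_right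
      rw [Set.mem_iUnion]
      refine ⟨⟨k, by omega⟩, ?_⟩
      subst hp; subst hq
      simp
end

section
/- Let γ : [0, 1] → ℝ² be continuously differentiable with γ'(t) ≠ 0 for all t ∈ [0, 1]. Then for every α > 0 there exists M ∈ ℕ, M ≥ 1, such that for every integer 0 ≤ i < M: γ(i/M) ≠ γ((i+1)/M), and for every t ∈ [i/M, (i+1)/M], the distance from γ(t) to the closed segment [γ(i/M), γ((i+1)/M)] is at most α · ‖γ((i+1)/M) − γ(i/M)‖. -/
open MeasureTheory Set Metric Filter ENNReal

set_option maxHeartbeats 1000000 in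
/-- A regular `C¹` curve admits, for every `α > 0`, a uniform partition such that on each
piece the curve stays within distance `α` times the chord length of the chord. -/
theorem exists_fine_partition_of_C1
    (γ : ℝ → EuclideanSpace ℝ (Fin 2))
    (hγ : ContDiffOn ℝ 1 γ (Set.Icc (0 : ℝ) 1))
    (hγ' : ∀ t ∈ Set.Icc (0 : ℝ) 1, derivWithin γ (Set.Icc (0 : ℝ) 1) t ≠ 0) :
    ∀ α : ℝ, 0 < α → ∃ M : ℕ, 1 ≤ M ∧ ∀ i : ℕ, i < M →
      γ ((i : ℝ) / M) ≠ γ (((i : ℝ) + 1) / M) ∧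
      ∀ t ∈ Set.Icc ((i : ℝ) / M) (((i : ℝ) + 1) / M),
        Metric.infDist (γ t) (segment ℝ (γ ((i : ℝ) / M)) (γ (((i : ℝ) + 1) / M))) ≤
          α * ‖γ (((i : ℝ) + 1) / M) - γ ((i : ℝ) / M)‖ := by
  intro α hα
  set I : Set ℝ := Set.Icc (0 : ℝ) 1 with hI
  have hU : UniqueDiffOn ℝ I := uniqueDiffOn_Icc zero_lt_one
  set g := derivWithin γ I with hg
  have hgc : ContinuousOn g I := hγ.continuousOn_derivWithin hU le_rfl
  obtain ⟨t₀, ht₀, hmin⟩ := isCompact_Icc.exists_isMinOn (Set.nonempty_Icc.2 zero_le_one)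
    (continuous_norm.comp_continuousOn hgc)
  set m := ‖g t₀‖ with hm
  have hm0 : 0 < m := norm_pos_iff.2 (hγ' t₀ ht₀)
  set ε := min (m / 2) (α * m / 4) with hε
  have hε0 : 0 < ε := lt_min (by positivity) (by positivity)
  have huc : UniformContinuousOn g I := isCompact_Icc.uniformContinuousOn_of_continuous hgc
  rw [Metric.uniformContinuousOn_iff] at huc
  obtain ⟨δ, hδ0, hδ⟩ := huc ε hε0
  obtain ⟨M, hM⟩ := exists_nat_one_div_lt hδ0
  refine ⟨M + 1, Nat.succ_le_succ (Nat.zero_le M), ?_⟩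
  intro i hi
  set N : ℝ := ((M + 1 : ℕ) : ℝ) with hN
  have hN0 : (0 : ℝ) < N := by positivity
  set a : ℝ := (i : ℝ) / N with ha
  set b : ℝ := ((i : ℝ) + 1) / N with hb
  have hiN : (i : ℝ) + 1 ≤ N := by
    have : (i : ℝ) ≤ (M : ℝ) := by exact_mod_cast Nat.lt_succ_iff.mp hi
    rw [hN]; push_cast; linarith
  have hab : b - a = 1 / N := by rw [ha, hb]; ring
  have hablt : b - a < δ := by
    rw [hab]; rw [hN]; push_cast; exact hM
  have ha0 : 0 ≤ a := by positivity
  have hb1 : b ≤ 1 := by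
    rw [hb, div_le_one hN0]; exact hiN
  have haltb : a < b := by
    rw [ha, hb, div_lt_div_iff_of_pos_right hN0]; linarith
  have hsub : Set.Icc a b ⊆ I := fun x hx => ⟨le_trans ha0 hx.1, le_trans hx.2 hb1⟩
  have haI : a ∈ I := hsub ⟨le_rfl, haltb.le⟩
  set v := g a with hv
  have hmv : m ≤ ‖v‖ := hmin haI
  -- key mean value estimate
  have key : ∀ y ∈ Set.Icc a b, ‖γ y - γ a - (y - a) • v‖ ≤ ε * (y - a) := by
    intro y hy
    have hder : ∀ x ∈ Set.Icc a b,
        HasDerivWithinAt (fun u => γ u - u • v) (g x - v) (Set.Icc a b) x := by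
      intro x hx
      have h1 : HasDerivWithinAt γ (g x) (Set.Icc a b) x :=
        ((hγ.differentiableOn one_ne_zero x (hsub hx)).hasDerivWithinAt).mono hsub
      have h2 : HasDerivWithinAt (fun u : ℝ => u • v) v (Set.Icc a b) x := by
        simpa using ((hasDerivAt_id x).smul_const v).hasDerivWithinAt
      exact h1.sub h2
    have hbound : ∀ x ∈ Set.Icc a b, ‖g x - v‖ ≤ ε := by
      intro x hx
      have hd : dist x a < δ := by
        rw [Real.dist_eq, abs_of_nonneg (by linarith [hx.1])]
        linarith [hx.2]
      exact (hδ x (hsub hx) a haI hd).le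
    have := Convex.norm_image_sub_le_of_norm_hasDerivWithin_le hder hbound (convex_Icc a b)
      ⟨le_rfl, haltb.le⟩ hy
    have heq : (γ y - y • v) - (γ a - a • v) = γ y - γ a - (y - a) • v := by
      rw [sub_smul]; abel
    rw [heq] at this
    calc ‖γ y - γ a - (y - a) • v‖ ≤ ε * ‖y - a‖ := this
      _ = ε * (y - a) := by rw [Real.norm_eq_abs, abs_of_nonneg (by linarith [hy.1])]
  set c := γ b - γ a with hc
  have hkey_b : ‖c - (b - a) • v‖ ≤ ε * (b - a) := key b ⟨haltb.le, le_rfl⟩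
  have hεm : ε ≤ m / 2 := min_le_left _ _
  have hεαm : ε ≤ α * m / 4 := min_le_right _ _
  have hba0 : 0 < b - a := by linarith
  have hclow : (b - a) * (m / 2) ≤ ‖c‖ := by
    have h1 : ‖(b - a) • v‖ - ‖c - (b - a) • v‖ ≤ ‖c‖ := by
      have h := norm_sub_norm_le ((b - a) • v) ((b - a) • v - c)
      rw [_root_.sub_sub_cancel, norm_sub_rev ((b - a) • v) c] at h
      exact h
    have h2 : ‖(b - a) • v‖ = (b - a) * ‖v‖ := by
      rw [norm_smul, Real.norm_eq_abs, abs_of_pos hba0]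
    nlinarith [hkey_b, hmv]
  have hcpos : 0 < ‖c‖ := lt_of_lt_of_le (by nlinarith) hclow
  constructor
  · intro h
    rw [hc] at hcpos
    simp [h] at hcpos
  · intro t ht
    have htI : t ∈ Set.Icc a b := ht
    set θ : ℝ := (t - a) / (b - a) with hθ
    have hθ0 : 0 ≤ θ := div_nonneg (by linarith [htI.1]) hba0.le
    have hθ1 : θ ≤ 1 := by
      rw [hθ, div_le_one hba0]; linarith [htI.2]
    have hp : γ a + θ • c ∈ segment ℝ (γ a) (γ b) := by
      rw [segment_eq_image']
      exact ⟨θ, ⟨hθ0, hθ1⟩, rfl⟩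
    have hdist : Metric.infDist (γ t) (segment ℝ (γ a) (γ b)) ≤ ‖γ t - (γ a + θ • c)‖ := by
      have := Metric.infDist_le_dist_of_mem hp (x := γ t)
      rwa [dist_eq_norm] at this
    have hdecomp : γ t - (γ a + θ • c) =
        (γ t - γ a - (t - a) • v) - θ • (c - (b - a) • v) := by
      have hba' : b - a ≠ 0 := ne_of_gt hba0
      rw [hθ, hc, hv]
      match_scalars <;> (field_simp; try ring)
    have hnorm : ‖γ t - (γ a + θ • c)‖ ≤ 2 * ε * (b - a) := by
      rw [hdecomp]
      calc ‖(γ t - γ a - (t - a) • v) - θ • (c - (b - a) • v)‖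
          ≤ ‖γ t - γ a - (t - a) • v‖ + ‖θ • (c - (b - a) • v)‖ := norm_sub_le _ _
        _ ≤ ε * (t - a) + θ * (ε * (b - a)) := by
            refine add_le_add (key t htI) ?_
            rw [norm_smul, Real.norm_eq_abs, abs_of_nonneg hθ0]
            exact mul_le_mul_of_nonneg_left hkey_b hθ0
        _ ≤ 2 * ε * (b - a) := by
            have h1 : ε * (t - a) ≤ ε * (b - a) :=
              mul_le_mul_of_nonneg_left (by linarith [htI.2]) hε0.le
            have h2 : θ * (ε * (b - a)) ≤ 1 * (ε * (b - a)) :=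
              mul_le_mul_of_nonneg_right hθ1 (by positivity)
            linarith
    have hfinal : 2 * ε * (b - a) ≤ α * ‖c‖ := by
      have : α * ((b - a) * (m / 2)) ≤ α * ‖c‖ := by
        exact mul_le_mul_of_nonneg_left hclow hα.le
      nlinarith
    calc Metric.infDist (γ t) (segment ℝ (γ a) (γ b)) ≤ ‖γ t - (γ a + θ • c)‖ := hdist
      _ ≤ 2 * ε * (b - a) := hnorm
      _ ≤ α * ‖c‖ := hfinal
end
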